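/- Let k ⊂ L be a finite separable field extension of degree n that is not a normal (Galois) extension. Then the number of intermediate fields satisfies |[k,L]| ≤ 2^{n−2}. -/

import Mathlib

open IntermediateField Module

/-- If every square lies in `H`, then `H` is normal. -/
private theorem aux_normal_of_sq {G : Type*} [Group G] {H : Subgroup G}
    (hsq : ∀ g : G, g ^ 2 ∈ H) : H.Normal := by
  have key : ∀ g : G, ∀ h ∈ H, g⁻¹ * h * g ∈ H := by
    intro g h hh
    have h1 : (g * h) ^ 2 ∈ H := hsq _
    have h2 : g ^ 2 ∈ H := hsq _
    have this1 := H.mul_mem (H.mul_mem (H.inv_mem h2) h1) (H.inv_mem hh)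
    have heq : (g ^ 2)⁻¹ * (g * h) ^ 2 * h⁻¹ = g⁻¹ * h * g := by
      rw [pow_two, pow_two, mul_inv_rev]
      simp [mul_assoc]
    rwa [heq] at this1
  constructor
  intro h hh g
  have := key g⁻¹ h hh
  simpa using this

/-- A non-normal subgroup of a finite group has at most `2 ^ (index - 2)` over-subgroups. -/
private theorem aux_count {G : Type*} [Group G] [Finite G] {H : Subgroup G}
    (hH : ¬ H.Normal) :
    Nat.card {K : Subgroup G // H ≤ K} ≤ 2 ^ (H.index - 2) := by
  classical
  obtain ⟨g₀, hg₀⟩ : ∃ g : G, g ^ 2 ∉ H := by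
    by_contra hc
    push_neg at hc
    exact hH (aux_normal_of_sq hc)
  have hg₀H : g₀ ∉ H := fun hg => hg₀ (H.pow_mem hg 2)
  let b : G ⧸ H := QuotientGroup.mk g₀⁻¹
  let a : G ⧸ H := QuotientGroup.mk g₀
  let o : G ⧸ H := QuotientGroup.mk 1
  have hmk_o : ∀ g : G, (QuotientGroup.mk g : G ⧸ H) = o ↔ g ∈ H := by
    intro g
    rw [QuotientGroup.eq]
    simp
  have hab : a ≠ b := by
    intro e
    apply hg₀
    have h1 : g₀⁻¹ * g₀⁻¹ ∈ H := QuotientGroup.eq.mp e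
    have h2 : (g₀ ^ 2)⁻¹ ∈ H := by rw [pow_two, mul_inv_rev]; exact h1
    simpa using H.inv_mem h2
  have ha1 : a ≠ o := fun e => hg₀H ((hmk_o g₀).mp e)
  have hb1 : b ≠ o := fun e => hg₀H (by simpa using H.inv_mem ((hmk_o g₀⁻¹).mp e))
  -- key: membership in an over-subgroup is detected by `Quotient.out`
  have key : ∀ (K : Subgroup G), H ≤ K → ∀ g : G,
      ((QuotientGroup.mk g : G ⧸ H).out ∈ K ↔ g ∈ K) := by
    intro K hK g
    have hmk : (QuotientGroup.mk ((QuotientGroup.mk g : G ⧸ H).out) : G ⧸ H)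
        = QuotientGroup.mk g := by rw [QuotientGroup.out_eq']
    have hmem : ((QuotientGroup.mk g : G ⧸ H).out)⁻¹ * g ∈ K := hK (QuotientGroup.eq.mp hmk)
    constructor
    · intro hx
      have := K.mul_mem hx hmem
      simpa [mul_assoc] using this
    · intro hx
      have := K.mul_mem hx (K.inv_mem hmem)
      simpa [mul_inv_rev, mul_assoc] using this
  -- the injection into subsets of the quotient minus two points
  let T := {x : G ⧸ H // x ≠ o ∧ x ≠ b}
  let f : {K : Subgroup G // H ≤ K} → Set T := fun K => {x | x.1.out ∈ K.1}
  have hinj : Function.Injective f := by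
    intro K₁ K₂ hf
    have hfx : ∀ x : T, (x.1.out ∈ K₁.1 ↔ x.1.out ∈ K₂.1) := by
      intro x
      constructor
      · intro hx; have : x ∈ f K₁ := hx; rw [hf] at this; exact this
      · intro hx; have : x ∈ f K₂ := hx; rw [← hf] at this; exact this
    apply Subtype.ext
    ext g
    by_cases hc1 : (QuotientGroup.mk g : G ⧸ H) = o
    · have hgH : g ∈ H := (hmk_o g).mp hc1
      exact ⟨fun _ => K₂.2 hgH, fun _ => K₁.2 hgH⟩
    · by_cases hcb : (QuotientGroup.mk g : G ⧸ H) = b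
      · -- membership of `g` is equivalent to membership of `g₀`
        have step : ∀ (K : Subgroup G), H ≤ K → (g ∈ K ↔ g₀ ∈ K) := by
          intro K hK
          have h1 : g ∈ K ↔ g₀⁻¹ ∈ K := by
            have hmem : g⁻¹ * g₀⁻¹ ∈ K := hK (QuotientGroup.eq.mp hcb)
            constructor
            · intro hx; simpa [mul_assoc] using K.mul_mem hx hmem
            · intro hx
              have := K.mul_mem hx (K.inv_mem hmem)
              simpa [mul_inv_rev, mul_assoc] using this
          rw [h1, K.inv_mem_iff]
        have this1 := hfx ⟨a, ha1, hab⟩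
        rw [key K₁.1 K₁.2 g₀, key K₂.1 K₂.2 g₀] at this1
        rw [step K₁.1 K₁.2, step K₂.1 K₂.2]
        exact this1
      · have this1 := hfx ⟨QuotientGroup.mk g, hc1, hcb⟩
        rwa [key K₁.1 K₁.2 g, key K₂.1 K₂.2 g] at this1
  have hTcard : Nat.card T = H.index - 2 := by
    have hQcard : Nat.card (G ⧸ H) = H.index := rfl
    have h2 : Nat.card T = Nat.card (({o, b}ᶜ : Set (G ⧸ H))) := by
      apply Nat.card_congr
      apply Equiv.subtypeEquivRight
      intro x
      simp [Set.mem_compl_iff, Set.mem_insert_iff, not_or]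
    rw [h2, Nat.card_coe_set_eq]
    have h3 := Set.ncard_add_ncard_compl ({o, b} : Set (G ⧸ H))
    rw [Set.ncard_pair (Ne.symm hb1), hQcard] at h3
    omega
  calc Nat.card {K : Subgroup G // H ≤ K} ≤ Nat.card (Set T) :=
        Nat.card_le_card_of_injective f hinj
    _ = 2 ^ Nat.card T := by
        have : Nat.card (Set T) = Nat.card Prop ^ Nat.card T := Nat.card_fun
        rw [this, Nat.card_congr Equiv.propEquivBool, Nat.card_eq_fintype_card,
          Fintype.card_bool]
    _ = 2 ^ (H.index - 2) := by rw [hTcard]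

set_option maxHeartbeats 1000000 in
set_option synthInstance.maxHeartbeats 1000000 in
/-- A finite separable field extension of degree `n` which is not Galois has at most
`2 ^ (n - 2)` intermediate fields. -/
theorem card_intermediateField_le_of_not_normal {k L : Type*} [Field k] [Field L]
    [Algebra k L] [FiniteDimensional k L] [Algebra.IsSeparable k L] (h : ¬ Normal k L) :
    Nat.card (IntermediateField k L) ≤ 2 ^ (Module.finrank k L - 2) := by
  classical
  letI Ω := AlgebraicClosure L
  haveI : Algebra.IsAlgebraic k L := Algebra.IsAlgebraic.of_finite k L
  haveI : Normal k Ω := IsAlgClosure.normal k Ω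
  set M := normalClosure k L Ω with hM
  haveI : FiniteDimensional k M := normalClosure.is_finiteDimensional k L Ω
  haveI : Algebra.IsSeparable k M := by
    rw [hM, normalClosure_def]
    haveI : ∀ g : L →ₐ[k] Ω, Algebra.IsSeparable k g.fieldRange := fun g =>
      AlgEquiv.Algebra.isSeparable (AlgEquiv.ofInjectiveField g)
    infer_instance
  haveI : IsGalois k M := ⟨⟩
  let f₀ : L →ₐ[k] Ω := IsScalarTower.toAlgHom k L Ω
  have hle : f₀.fieldRange ≤ M := f₀.fieldRange_le_normalClosure
  let ι : L →ₐ[k] M :=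
    (IntermediateField.inclusion hle).comp (AlgEquiv.ofInjectiveField f₀).toAlgHom
  let L₀ : IntermediateField k M := (⊤ : IntermediateField k L).map ι
  let e : L ≃ₐ[k] ↥L₀ := (topEquiv (F := k) (E := L)).symm.trans (equivMap ⊤ ι)
  set G := M ≃ₐ[k] M
  set H : Subgroup G := L₀.fixingSubgroup with hH
  -- H is not normal
  have hHnormal : ¬ H.Normal := by
    intro hn
    haveI := hn
    have hgal : IsGalois k ↥(IntermediateField.fixedField H) :=
      IsGalois.of_fixedField_normal_subgroup H
    rw [hH, IsGalois.fixedField_fixingSubgroup] at hgal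
    exact h (Normal.of_algEquiv e.symm)
  -- the index of H is the degree of L over k
  haveI : Finite G := Finite.of_fintype G
  have hidx : H.index = Module.finrank k L := by
    have h1 : Nat.card H * H.index = Nat.card G := Subgroup.card_mul_index H
    have h2 : Nat.card G = Module.finrank k M := by
      rw [IsGalois.card_aut_eq_finrank]
    have h3 : Nat.card H = Module.finrank ↥L₀ ↥M := by
      rw [Nat.card_congr (IntermediateField.fixingSubgroupEquiv L₀).toEquiv,
        IsGalois.card_aut_eq_finrank]
    have h4 : Module.finrank k ↥L₀ * Module.finrank ↥L₀ ↥M = Module.finrank k M :=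
      Module.finrank_mul_finrank k ↥L₀ ↥M
    have h5 : Module.finrank k L = Module.finrank k ↥L₀ := e.toLinearEquiv.finrank_eq
    have hpos : 0 < Module.finrank ↥L₀ ↥M := Module.finrank_pos
    apply Nat.eq_of_mul_eq_mul_left hpos
    calc Module.finrank ↥L₀ ↥M * H.index = Nat.card H * H.index := by rw [h3]
      _ = Module.finrank k M := by rw [h1, h2]
      _ = Module.finrank k ↥L₀ * Module.finrank ↥L₀ ↥M := h4.symm
      _ = Module.finrank ↥L₀ ↥M * Module.finrank k L := by rw [h5, mul_comm]
  -- the injection from intermediate fields to over-subgroups of H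
  haveI : Finite (Subgroup G) :=
    Finite.of_injective (fun K : Subgroup G => (K : Set G)) SetLike.coe_injective
  have hmem : ∀ F : IntermediateField k L, H ≤ (F.map ι).fixingSubgroup := by
    intro F σ hσ
    rw [IntermediateField.mem_fixingSubgroup_iff] at hσ ⊢
    intro x hx
    exact hσ x (IntermediateField.map_mono ι (le_top : F ≤ ⊤) hx)
  let Ψ : IntermediateField k L → {K : Subgroup G // H ≤ K} :=
    fun F => ⟨(F.map ι).fixingSubgroup, hmem F⟩
  have hΨinj : Function.Injective Ψ := by
    intro F₁ F₂ hFF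
    have h1 : (F₁.map ι).fixingSubgroup = (F₂.map ι).fixingSubgroup :=
      congrArg Subtype.val hFF
    have h2 : F₁.map ι = F₂.map ι := by
      have := congrArg IntermediateField.fixedField h1
      rwa [IsGalois.fixedField_fixingSubgroup, IsGalois.fixedField_fixingSubgroup] at this
    exact IntermediateField.map_injective ι h2
  calc Nat.card (IntermediateField k L) ≤ Nat.card {K : Subgroup G // H ≤ K} :=
        Nat.card_le_card_of_injective Ψ hΨinj
    _ ≤ 2 ^ (H.index - 2) := aux_count hHnormal
    _ = 2 ^ (Module.finrank k L - 2) := by rw [hidx]
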